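/- Let X be a quasi-Polish space and E ⊆ X² an equivalence relation such that the quotient map X → X/E (with quotient topology) is open. Then the following are equivalent: (1) X/E is quasi-Polish; (2) X/E is T₀; (3) E is Π⁰₂ in X²; (4) every E-class [x]_E is Π⁰₂ in X. -/

import Mathlib

open Set

/-- A `Π⁰₂` set: a countable intersection of sets `(U ⇒ V) = Uᶜ ∪ V` with `U, V` open. -/
def IsPi02 {X : Type*} [TopologicalSpace X] (A : Set X) : Prop :=
  ∃ U V : ℕ → Set X, (∀ n, IsOpen (U n)) ∧ (∀ n, IsOpen (V n)) ∧
    A = ⋂ n, ((U n)ᶜ ∪ V n)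

/-- A quasi-Polish space: homeomorphic (via an embedding) to a `Π⁰₂` subspace of
the countable power `ℕ → Prop` of the Sierpiński space. -/
def QuasiPolish (X : Type*) [TopologicalSpace X] : Prop :=
  ∃ f : X → (ℕ → Prop), Topology.IsEmbedding f ∧ IsPi02 (Set.range f)

open Topology

set_option linter.unusedVariables false
set_option linter.unusedSectionVars false

lemma prop_open_mono {u : Set Prop} (hu : IsOpen u) {p q : Prop} (hp : p ∈ u) (hpq : p → q) :
    q ∈ u := by
  have h : TopologicalSpace.GenerateOpen {{True}} u := hu
  clear hu
  revert hp
  induction h with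
  | basic s hs =>
      rw [mem_singleton_iff] at hs; subst hs
      intro hp
      simp only [mem_singleton_iff] at hp ⊢
      have : p := hp ▸ trivial
      exact propext ⟨fun _ => trivial, fun _ => hpq this⟩
  | univ => intro _; trivial
  | inter s t hs ht ihs iht => exact fun hp => ⟨ihs hp.1, iht hp.2⟩
  | sUnion S hS ih =>
      rintro ⟨t, htS, hpt⟩; exact ⟨t, htS, ih t htS hpt⟩

/-- basic open cylinder in `ℕ → Prop` -/
def cyl (F : Finset ℕ) : Set (ℕ → Prop) := {α | ∀ n ∈ F, α n}

lemma isOpen_sb (n : ℕ) : IsOpen {α : ℕ → Prop | α n} := by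
  have : {α : ℕ → Prop | α n} = (fun α : ℕ → Prop => α n) ⁻¹' {p | p} := rfl
  rw [this]
  apply (continuous_apply n).isOpen_preimage
  have : {p : Prop | p} = {True} := by ext p; simp [eq_iff_iff]
  rw [this]; exact isOpen_singleton_true

lemma isOpen_cyl (F : Finset ℕ) : IsOpen (cyl F) := by
  have : cyl F = ⋂ n ∈ F, {α : ℕ → Prop | α n} := by
    ext α; simp [cyl]
  rw [this]
  exact isOpen_biInter_finset fun n _ => isOpen_sb n

lemma cyl_mono {F G : Finset ℕ} (h : F ⊆ G) : cyl G ⊆ cyl F :=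
  fun α hα n hn => hα n (h hn)

lemma cyl_union (F G : Finset ℕ) : cyl (F ∪ G) = cyl F ∩ cyl G := by
  ext α
  constructor
  · exact fun h => ⟨fun n hn => h n (Finset.mem_union_left _ hn),
      fun n hn => h n (Finset.mem_union_right _ hn)⟩
  · rintro ⟨h1, h2⟩ n hn
    rcases Finset.mem_union.1 hn with h | h
    · exact h1 n h
    · exact h2 n h

lemma exists_cyl {W : Set (ℕ → Prop)} (hW : IsOpen W) {α : ℕ → Prop} (hα : α ∈ W) :
    ∃ F : Finset ℕ, α ∈ cyl F ∧ cyl F ⊆ W := by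
  obtain ⟨I, u, hu, hsub⟩ := isOpen_pi_iff.1 hW α hα
  classical
  refine ⟨I.filter (fun i => α i), fun n hn => (Finset.mem_filter.1 hn).2, ?_⟩
  intro β hβ
  apply hsub
  intro i hi
  rcases hu i hi with ⟨hui, hαi⟩
  by_cases h : α i
  · exact prop_open_mono hui hαi (fun _ => hβ i (Finset.mem_filter.2 ⟨hi, h⟩))
  · exact prop_open_mono hui hαi (fun hc => absurd hc h)

/-- the limit point of an increasing sequence of finite sets -/
def limpt (Gs : ℕ → Finset ℕ) : ℕ → Prop := fun n => ∃ i, n ∈ Gs i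

lemma limpt_mem_cyl {Gs : ℕ → Finset ℕ} (i : ℕ) : limpt Gs ∈ cyl (Gs i) :=
  fun n hn => ⟨i, hn⟩

lemma finset_subset_stage {Gs : ℕ → Finset ℕ} (hmono : ∀ i j, i ≤ j → Gs i ⊆ Gs j)
    (F : Finset ℕ) (h : ∀ n ∈ F, ∃ i, n ∈ Gs i) : ∃ i, F ⊆ Gs i := by
  classical
  induction F using Finset.induction_on with
  | empty => exact ⟨0, Finset.empty_subset _⟩
  | @insert a F ha ih =>
      obtain ⟨i, hi⟩ := ih (fun n hn => h n (Finset.mem_insert_of_mem hn))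
      obtain ⟨j, hj⟩ := h a (Finset.mem_insert_self a F)
      exact ⟨max i j, Finset.insert_subset (hmono j _ (le_max_right i j) hj)
        (hi.trans (hmono i _ (le_max_left i j)))⟩

lemma limpt_mem_open_iff {Gs : ℕ → Finset ℕ} (hmono : ∀ i j, i ≤ j → Gs i ⊆ Gs j)
    {W : Set (ℕ → Prop)} (hW : IsOpen W) :
    limpt Gs ∈ W ↔ ∃ i, cyl (Gs i) ⊆ W := by
  constructor
  · intro h
    obtain ⟨F, hF1, hF2⟩ := exists_cyl hW h
    obtain ⟨i, hi⟩ := finset_subset_stage hmono F hF1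
    exact ⟨i, (cyl_mono hi).trans hF2⟩
  · rintro ⟨i, hi⟩
    exact hi (limpt_mem_cyl i)

/-- The generic construction scheme: starting from `∅`, repeatedly extend a finite set,
attending to every task infinitely often. -/
lemma scheme {τ : Type*} [Encodable τ] (Inv : Finset ℕ → Prop) (Trig Goal : τ → Finset ℕ → Prop)
    (hInv0 : Inv ∅)
    (hTrigMono : ∀ t G G', G ⊆ G' → Trig t G → Trig t G')
    (hstep : ∀ t G, Inv G → Trig t G → ∃ G', G ⊆ G' ∧ Inv G' ∧ Goal t G') :
    ∃ Gs : ℕ → Finset ℕ, (∀ i j, i ≤ j → Gs i ⊆ Gs j) ∧ (∀ i, Inv (Gs i)) ∧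
      ∀ t i, Trig t (Gs i) → ∃ j, Goal t (Gs j) := by
  classical
  let step1 : Finset ℕ → Option τ → Finset ℕ := fun G o =>
    match o with
    | none => G
    | some t => if h : Inv G ∧ Trig t G then (hstep t G h.1 h.2).choose else G
  have hsub : ∀ G o, G ⊆ step1 G o := by
    rintro G (_ | t)
    · exact subset_rfl
    · simp only [step1]
      by_cases h : Inv G ∧ Trig t G
      · rw [dif_pos h]; exact (hstep t G h.1 h.2).choose_spec.1
      · rw [dif_neg h]
  have hinv : ∀ G o, Inv G → Inv (step1 G o) := by
    rintro G (_ | t) hI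
    · exact hI
    · simp only [step1]
      by_cases h : Inv G ∧ Trig t G
      · rw [dif_pos h]; exact (hstep t G h.1 h.2).choose_spec.2.1
      · rw [dif_neg h]; exact hI
  let Gs : ℕ → Finset ℕ := fun i => Nat.rec ∅ (fun i G => step1 G (Encodable.decode (Nat.unpair i).1)) i
  have hstep' : ∀ i, Gs (i + 1) = step1 (Gs i) (Encodable.decode (Nat.unpair i).1) := fun _ => rfl
  have hmono1 : ∀ i, Gs i ⊆ Gs (i + 1) := fun i => hsub _ _
  have hmono : ∀ i j, i ≤ j → Gs i ⊆ Gs j := by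
    intro i j hij
    induction j with
    | zero => rw [Nat.le_zero.1 hij]
    | succ j ih =>
        rcases Nat.lt_or_ge i (j+1) with h | h
        · exact (ih (Nat.lt_succ_iff.1 h)).trans (hmono1 j)
        · rw [Nat.le_antisymm hij h]
  have hinvAll : ∀ i, Inv (Gs i) := by
    intro i
    induction i with
    | zero => exact hInv0
    | succ i ih => exact hinv _ _ ih
  refine ⟨Gs, hmono, hinvAll, ?_⟩
  intro t i htrig
  set j := Nat.pair (Encodable.encode t) i with hj
  have hij : i ≤ j := Nat.right_le_pair _ _
  have htrigj : Trig t (Gs j) := hTrigMono t _ _ (hmono i j hij) htrig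
  refine ⟨j + 1, ?_⟩
  have hd : (Encodable.decode (Nat.unpair j).1 : Option τ) = some t := by
    rw [hj, Nat.unpair_pair]; exact Encodable.encodek t
  rw [hstep' j, hd]
  simp only [step1]
  rw [dif_pos ⟨hinvAll j, htrigj⟩]
  exact (hstep t (Gs j) (hinvAll j) htrigj).choose_spec.2.2

lemma isPi02_of_encodable {X : Type*} [TopologicalSpace X] {ι : Type*} [Encodable ι]
    (U V : ι → Set X) (hU : ∀ i, IsOpen (U i)) (hV : ∀ i, IsOpen (V i)) {A : Set X}
    (hA : A = ⋂ i, ((U i)ᶜ ∪ V i)) : IsPi02 A := by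
  classical
  refine ⟨fun n => match (Encodable.decode n : Option ι) with
            | some i => U i | none => ∅,
          fun n => match (Encodable.decode n : Option ι) with
            | some i => V i | none => ∅, ?_, ?_, ?_⟩
  · intro n
    rcases h : (Encodable.decode n : Option ι) with _ | i <;> simp [h, hU]
  · intro n
    rcases h : (Encodable.decode n : Option ι) with _ | i <;> simp [h, hV]
  · rw [hA]
    apply subset_antisymm
    · intro x hx
      simp only [mem_iInter] at hx ⊢
      intro n
      rcases h : (Encodable.decode n : Option ι) with _ | i
      · simp [h]
      · simpa [h] using hx i
    · intro x hx
      simp only [mem_iInter] at hx ⊢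
      intro i
      have := hx (Encodable.encode i)
      simpa [Encodable.encodek] using this

lemma IsPi02.inter {X : Type*} [TopologicalSpace X] {A B : Set X}
    (hA : IsPi02 A) (hB : IsPi02 B) : IsPi02 (A ∩ B) := by
  obtain ⟨U, V, hU, hV, hA⟩ := hA
  obtain ⟨U', V', hU', hV', hB⟩ := hB
  refine isPi02_of_encodable (ι := ℕ ⊕ ℕ)
    (Sum.elim U U') (Sum.elim V V')
    (fun i => by cases i <;> simp [hU, hU']) (fun i => by cases i <;> simp [hV, hV']) ?_
  rw [hA, hB]
  apply subset_antisymm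
  · rintro x ⟨h1, h2⟩
    simp only [mem_iInter] at h1 h2 ⊢
    rintro (n | n)
    · exact h1 n
    · exact h2 n
  · intro x hx
    simp only [mem_iInter] at hx
    exact ⟨by simp only [mem_iInter]; intro n; exact hx (Sum.inl n),
           by simp only [mem_iInter]; intro n; exact hx (Sum.inr n)⟩

lemma IsPi02.preimage {X Y : Type*} [TopologicalSpace X] [TopologicalSpace Y]
    {f : X → Y} (hf : Continuous f) {A : Set Y} (hA : IsPi02 A) : IsPi02 (f ⁻¹' A) := by
  obtain ⟨U, V, hU, hV, hA⟩ := hA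
  refine ⟨fun n => f ⁻¹' U n, fun n => f ⁻¹' V n,
    fun n => (hU n).preimage hf, fun n => (hV n).preimage hf, ?_⟩
  rw [hA]
  ext x
  simp [mem_iInter]

lemma IsPi02.image_embedding {X : Type*} [TopologicalSpace X] {f : X → (ℕ → Prop)}
    (hf : Topology.IsEmbedding f) (hr : IsPi02 (Set.range f)) {A : Set X} (hA : IsPi02 A) :
    IsPi02 (f '' A) := by
  obtain ⟨U, V, hU, hV, hA⟩ := hA
  -- extend each U n, V n to opens of the ambient space
  have hext : ∀ n, ∃ W : Set (ℕ → Prop), IsOpen W ∧ f ⁻¹' W = U n := fun n =>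
    hf.isInducing.isOpen_iff.1 (hU n)
  have hext' : ∀ n, ∃ W : Set (ℕ → Prop), IsOpen W ∧ f ⁻¹' W = V n := fun n =>
    hf.isInducing.isOpen_iff.1 (hV n)
  choose Uh hUh hUh2 using hext
  choose Vh hVh hVh2 using hext'
  have : f '' A = Set.range f ∩ ⋂ n, ((Uh n)ᶜ ∪ Vh n) := by
    apply subset_antisymm
    · rintro _ ⟨x, hx, rfl⟩
      refine ⟨mem_range_self x, ?_⟩
      simp only [mem_iInter]
      intro n
      rw [hA] at hx
      simp only [mem_iInter] at hx
      rcases hx n with h | h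
      · left; intro hc; exact h (by rw [← hUh2 n]; exact hc)
      · right; rw [← hVh2 n] at h; exact h
    · rintro β ⟨⟨x, rfl⟩, h2⟩
      refine ⟨x, ?_, rfl⟩
      rw [hA]
      simp only [mem_iInter] at h2 ⊢
      intro n
      rcases h2 n with h | h
      · left; intro hc; exact h (by rw [← hUh2 n] at hc; exact hc)
      · right; rw [← hVh2 n]; exact h
  rw [this]
  exact hr.inter (isPi02_of_encodable Uh Vh hUh hVh rfl)

lemma mem_cyl_empty (α : ℕ → Prop) : α ∈ cyl ∅ := by simp [cyl]

/-- Two Π⁰₂ subsets of `ℕ → Prop` with the same closure (expressed via basic opens)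
intersect, provided one of them is nonempty. -/
lemma pi02_dense_inter {A₁ A₂ : Set (ℕ → Prop)} (h₁ : IsPi02 A₁) (h₂ : IsPi02 A₂)
    (hne : A₁.Nonempty)
    (hd : ∀ F : Finset ℕ, (cyl F ∩ A₁).Nonempty ↔ (cyl F ∩ A₂).Nonempty) :
    (A₁ ∩ A₂).Nonempty := by
  obtain ⟨U₁, V₁, hU₁, hV₁, hA₁⟩ := h₁
  obtain ⟨U₂, V₂, hU₂, hV₂, hA₂⟩ := h₂
  have hmem₁ : ∀ a, a ∈ A₁ → ∀ n, a ∈ U₁ n → a ∈ V₁ n := by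
    intro a ha n hu
    rw [hA₁] at ha; simp only [mem_iInter] at ha
    rcases ha n with h | h
    · exact absurd hu h
    · exact h
  have hmem₂ : ∀ a, a ∈ A₂ → ∀ n, a ∈ U₂ n → a ∈ V₂ n := by
    intro a ha n hu
    rw [hA₂] at ha; simp only [mem_iInter] at ha
    rcases ha n with h | h
    · exact absurd hu h
    · exact h
  obtain ⟨Gs, hmono, hinv, hach⟩ := scheme (τ := ℕ ⊕ ℕ)
    (fun G => (cyl G ∩ A₁).Nonempty)
    (fun t G => cyl G ⊆ Sum.elim U₁ U₂ t)
    (fun t G => cyl G ⊆ Sum.elim V₁ V₂ t)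
    (⟨hne.choose, mem_cyl_empty _, hne.choose_spec⟩)
    (fun t G G' hGG' h => (cyl_mono hGG').trans h)
    (by
      rintro (n | n) G hInv hTrig
      · obtain ⟨a, haC, haA⟩ := hInv
        have hav : a ∈ V₁ n := hmem₁ a haA n (hTrig haC)
        obtain ⟨F, haF, hFV⟩ := exists_cyl (hV₁ n) hav
        refine ⟨G ∪ F, Finset.subset_union_left, ?_, ?_⟩
        · exact ⟨a, by rw [cyl_union]; exact ⟨haC, haF⟩, haA⟩
        · show cyl (G ∪ F) ⊆ V₁ n
          rw [cyl_union]
          exact (inter_subset_right).trans hFV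
      · obtain ⟨a, haC, haA⟩ := (hd G).1 hInv
        have hav : a ∈ V₂ n := hmem₂ a haA n (hTrig haC)
        obtain ⟨F, haF, hFV⟩ := exists_cyl (hV₂ n) hav
        refine ⟨G ∪ F, Finset.subset_union_left, ?_, ?_⟩
        · exact (hd (G ∪ F)).2 ⟨a, by rw [cyl_union]; exact ⟨haC, haF⟩, haA⟩
        · show cyl (G ∪ F) ⊆ V₂ n
          rw [cyl_union]
          exact (inter_subset_right).trans hFV)
  refine ⟨limpt Gs, ?_, ?_⟩
  · rw [hA₁]
    simp only [mem_iInter]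
    intro n
    by_cases h : limpt Gs ∈ U₁ n
    · obtain ⟨i, hi⟩ := (limpt_mem_open_iff hmono (hU₁ n)).1 h
      obtain ⟨j, hj⟩ := hach (Sum.inl n) i hi
      exact Or.inr (hj (limpt_mem_cyl j))
    · exact Or.inl h
  · rw [hA₂]
    simp only [mem_iInter]
    intro n
    by_cases h : limpt Gs ∈ U₂ n
    · obtain ⟨i, hi⟩ := (limpt_mem_open_iff hmono (hU₂ n)).1 h
      obtain ⟨j, hj⟩ := hach (Sum.inr n) i hi
      exact Or.inr (hj (limpt_mem_cyl j))
    · exact Or.inl h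

section Quot

variable {X : Type*} [TopologicalSpace X] {f : X → ℕ → Prop} {s : Setoid X}

/-- basic open subsets of `X` pulled back from cylinders -/
def Bs (f : X → ℕ → Prop) (G : Finset ℕ) : Set X := f ⁻¹' cyl G

/-- their images in the quotient -/
def Ps (f : X → ℕ → Prop) (s : Setoid X) (G : Finset ℕ) : Set (Quotient s) :=
  Quotient.mk s '' Bs f G

lemma isOpen_Bs (hf : IsEmbedding f) (G : Finset ℕ) : IsOpen (Bs f G) :=
  (isOpen_cyl G).preimage hf.continuous

lemma isOpen_Ps (hf : IsEmbedding f) (hopen : IsOpenMap (Quotient.mk s)) (G : Finset ℕ) :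
    IsOpen (Ps f s G) := hopen _ (isOpen_Bs hf G)

lemma basic_nbhd (hf : IsEmbedding f) {O : Set X} (hO : IsOpen O) {x : X} (hx : x ∈ O) :
    ∃ G : Finset ℕ, x ∈ Bs f G ∧ Bs f G ⊆ O := by
  obtain ⟨W, hW, hWO⟩ := hf.isInducing.isOpen_iff.1 hO
  obtain ⟨G, hG1, hG2⟩ := exists_cyl hW (show f x ∈ W by rw [← hWO] at hx; exact hx)
  exact ⟨G, hG1, by rw [← hWO]; exact fun z hz => hG2 hz⟩

lemma mem_W_of_mem_Ps (hf : IsEmbedding f) (hopen : IsOpenMap (Quotient.mk s))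
    {W : Set (Quotient s)} (hW : IsOpen W) {x : X} (hx : Quotient.mk s x ∈ W) :
    ∃ G : Finset ℕ, Quotient.mk s x ∈ Ps f s G ∧ Ps f s G ⊆ W := by
  have hx' : x ∈ Quotient.mk s ⁻¹' W := hx
  obtain ⟨G, hG1, hG2⟩ := basic_nbhd hf (hW.preimage continuous_quotient_mk') hx'
  refine ⟨G, mem_image_of_mem _ hG1, ?_⟩
  calc Ps f s G ⊆ Quotient.mk s '' (Quotient.mk s ⁻¹' W) := image_mono hG2
    _ ⊆ W := image_preimage_subset _ _

lemma insep_of_agree (hf : IsEmbedding f) (hopen : IsOpenMap (Quotient.mk s)) {x y : X}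
    (h : ∀ G, Quotient.mk s x ∈ Ps f s G ↔ Quotient.mk s y ∈ Ps f s G) :
    Inseparable (Quotient.mk s x) (Quotient.mk s y) := by
  rw [inseparable_iff_forall_isOpen]
  have key : ∀ x' y' : X, (∀ G, Quotient.mk s x' ∈ Ps f s G → Quotient.mk s y' ∈ Ps f s G) →
      ∀ W : Set (Quotient s), IsOpen W → Quotient.mk s x' ∈ W → Quotient.mk s y' ∈ W := by
    intro x' y' hagree W hW hx
    obtain ⟨G, hG1, hG2⟩ := mem_W_of_mem_Ps hf hopen hW hx
    exact hG2 (hagree G hG1)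
  intro W hW
  exact ⟨key x y (fun G => (h G).1) W hW, key y x (fun G => (h G).2) W hW⟩

lemma imp12 : QuasiPolish (Quotient s) → T0Space (Quotient s) := by
  rintro ⟨g, hg, -⟩
  exact hg.t0Space

lemma imp23 (hf : IsEmbedding f) (hopen : IsOpenMap (Quotient.mk s))
    (hT0 : T0Space (Quotient s)) : IsPi02 {p : X × X | s.r p.1 p.2} := by
  classical
  set S : Finset ℕ → Set X := fun G => Quotient.mk s ⁻¹' Ps f s G with hS
  have hSopen : ∀ G, IsOpen (S G) := fun G =>
    (isOpen_Ps hf hopen G).preimage continuous_quotient_mk'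
  refine isPi02_of_encodable (ι := Finset ℕ × Bool)
    (fun t => if t.2 then S t.1 ×ˢ univ else univ ×ˢ S t.1)
    (fun t => S t.1 ×ˢ S t.1)
    (fun t => by split
                 exacts [(hSopen t.1).prod isOpen_univ, isOpen_univ.prod (hSopen t.1)])
    (fun t => (hSopen t.1).prod (hSopen t.1)) ?_
  apply subset_antisymm
  · rintro ⟨x, y⟩ hxy
    have hq : Quotient.mk s x = Quotient.mk s y := Quotient.sound hxy
    simp only [mem_iInter]
    rintro ⟨G, b⟩
    have hiff : x ∈ S G ↔ y ∈ S G := by rw [hS]; simp only [mem_preimage, hq]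
    rcases b with _ | _
    · dsimp only
      rw [if_neg (by simp)]
      by_cases h : y ∈ S G
      · exact Or.inr ⟨hiff.2 h, h⟩
      · exact Or.inl (by simp [h])
    · dsimp only
      rw [if_pos rfl]
      by_cases h : x ∈ S G
      · exact Or.inr ⟨h, hiff.1 h⟩
      · exact Or.inl (by simp [h])
  · rintro ⟨x, y⟩ h
    simp only [mem_iInter] at h
    have hagree : ∀ G, Quotient.mk s x ∈ Ps f s G ↔ Quotient.mk s y ∈ Ps f s G := by
      intro G
      constructor
      · intro hx
        have := h ⟨G, true⟩
        dsimp only at this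
        rw [if_pos rfl] at this
        rcases this with hc | hc
        · exact absurd (show (x, y) ∈ S G ×ˢ univ from ⟨hx, mem_univ _⟩) hc
        · exact hc.2
      · intro hy
        have := h ⟨G, false⟩
        dsimp only at this
        rw [if_neg (by simp)] at this
        rcases this with hc | hc
        · exact absurd (show (x, y) ∈ univ ×ˢ S G from ⟨mem_univ _, hy⟩) hc
        · exact hc.1
    have hins := insep_of_agree hf hopen hagree
    exact Quotient.exact (hins.eq)

lemma imp34 (h : IsPi02 {p : X × X | s.r p.1 p.2}) (x : X) : IsPi02 {y : X | s.r x y} := by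
  have : {y : X | s.r x y} = (fun y => (x, y)) ⁻¹' {p : X × X | s.r p.1 p.2} := rfl
  rw [this]
  exact h.preimage (continuous_const.prodMk continuous_id)

lemma imp42 (hf : IsEmbedding f) (hr : IsPi02 (Set.range f))
    (hopen : IsOpenMap (Quotient.mk s))
    (h4 : ∀ x : X, IsPi02 {y : X | s.r x y}) : T0Space (Quotient s) := by
  rw [t0Space_iff_inseparable]
  intro a b hab
  obtain ⟨x₁, rfl⟩ := Quotient.exists_rep a
  obtain ⟨x₂, rfl⟩ := Quotient.exists_rep b
  have hA₁ : IsPi02 (f '' {y : X | s.r x₁ y}) := IsPi02.image_embedding hf hr (h4 x₁)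
  have hA₂ : IsPi02 (f '' {y : X | s.r x₂ y}) := IsPi02.image_embedding hf hr (h4 x₂)
  have hins : Inseparable (Quotient.mk s x₁) (Quotient.mk s x₂) := hab
  have key : ∀ (u v : X), Inseparable (Quotient.mk s u) (Quotient.mk s v) →
      ∀ F : Finset ℕ, (cyl F ∩ f '' {y : X | s.r u y}).Nonempty →
      (cyl F ∩ f '' {y : X | s.r v y}).Nonempty := by
    rintro u v huv F ⟨z, hzF, c, hc, rfl⟩
    have hcB : c ∈ Bs f F := hzF
    have hu : Quotient.mk s u ∈ Ps f s F := by
      rw [show Quotient.mk s u = Quotient.mk s c from Quotient.sound hc]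
      exact mem_image_of_mem _ hcB
    have hv : Quotient.mk s v ∈ Ps f s F :=
      (inseparable_iff_forall_isOpen.1 huv _ (isOpen_Ps hf hopen F)).1 hu
    obtain ⟨c₂, hc₂B, hc₂q⟩ := hv
    exact ⟨f c₂, hc₂B, c₂, s.iseqv.symm (Quotient.exact hc₂q), rfl⟩
  have hd : ∀ F : Finset ℕ, (cyl F ∩ f '' {y : X | s.r x₁ y}).Nonempty ↔
      (cyl F ∩ f '' {y : X | s.r x₂ y}).Nonempty :=
    fun F => ⟨key x₁ x₂ hins F, key x₂ x₁ hins.symm F⟩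
  obtain ⟨z, hz₁, hz₂⟩ := pi02_dense_inter hA₁ hA₂
    ⟨f x₁, mem_image_of_mem _ (s.iseqv.refl x₁)⟩ hd
  obtain ⟨c, hc, rfl⟩ := hz₁
  obtain ⟨c', hc', hcc'⟩ := hz₂
  have : c' = c := hf.injective hcc'
  subst this
  exact Quotient.sound (s.iseqv.trans hc (s.iseqv.symm hc'))


/-- subbasic open of `ℕ → Prop` -/
def Sb (m : ℕ) : Set (ℕ → Prop) := {β | β m}

lemma isOpen_Sb (m : ℕ) : IsOpen (Sb m) := isOpen_sb m

/-- the candidate embedding of the quotient into `ℕ → Prop` -/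
def gmap (f : X → ℕ → Prop) (s : Setoid X) (y : Quotient s) (n : ℕ) : Prop :=
  ∃ G : Finset ℕ, (Encodable.decode n : Option (Finset ℕ)) = some G ∧ y ∈ Ps f s G

lemma gmap_encode (f : X → ℕ → Prop) (s : Setoid X) (y : Quotient s) (G : Finset ℕ) :
    gmap f s y (Encodable.encode G) ↔ y ∈ Ps f s G := by
  constructor
  · rintro ⟨G', hG', hy⟩
    rw [Encodable.encodek] at hG'
    obtain rfl : G = G' := by injection hG'
    exact hy
  · intro hy
    exact ⟨G, Encodable.encodek G, hy⟩

lemma gmap_decode {f : X → ℕ → Prop} {s : Setoid X} {y : Quotient s} {n : ℕ} {K : Finset ℕ}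
    (hd : (Encodable.decode n : Option (Finset ℕ)) = some K) :
    gmap f s y n ↔ y ∈ Ps f s K := by
  constructor
  · rintro ⟨G', hG', hy⟩
    rw [hd] at hG'
    obtain rfl : K = G' := by injection hG'
    exact hy
  · intro hy
    exact ⟨K, hd, hy⟩

lemma gmap_continuous (hf : IsEmbedding f) (hopen : IsOpenMap (Quotient.mk s)) :
    Continuous (gmap f s) := by
  apply continuous_pi
  intro n
  rw [continuous_Prop]
  rcases hd : (Encodable.decode n : Option (Finset ℕ)) with _ | K
  · have : {y : Quotient s | gmap f s y n} = ∅ := by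
      ext y
      simp only [mem_setOf_eq, mem_empty_iff_false, iff_false]
      rintro ⟨G, hG, -⟩
      rw [hd] at hG
      exact nomatch hG
    rw [this]; exact isOpen_empty
  · have : {y : Quotient s | gmap f s y n} = Ps f s K := by
      ext y; exact gmap_decode hd
    rw [this]; exact isOpen_Ps hf hopen K

lemma gmap_injective (hf : IsEmbedding f) (hopen : IsOpenMap (Quotient.mk s))
    (hT0 : T0Space (Quotient s)) : Function.Injective (gmap f s) := by
  intro y₁ y₂ h
  obtain ⟨x₁, rfl⟩ := Quotient.exists_rep y₁
  obtain ⟨x₂, rfl⟩ := Quotient.exists_rep y₂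
  apply Inseparable.eq
  apply insep_of_agree hf hopen
  intro G
  rw [← gmap_encode f s _ G, ← gmap_encode f s _ G, h]

lemma gmap_inducing (hf : IsEmbedding f) (hopen : IsOpenMap (Quotient.mk s)) :
    IsInducing (gmap f s) := by
  constructor
  apply le_antisymm (continuous_iff_le_induced.1 (gmap_continuous hf hopen))
  rw [TopologicalSpace.le_def]
  intro W hW
  rw [isOpen_induced_iff]
  refine ⟨⋃ G ∈ {G : Finset ℕ | Ps f s G ⊆ W}, Sb (Encodable.encode G), ?_, ?_⟩
  · exact isOpen_biUnion fun G _ => isOpen_Sb _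
  · ext y
    simp only [mem_preimage, mem_iUnion, mem_setOf_eq]
    constructor
    · rintro ⟨G, hGW, hy⟩
      exact hGW ((gmap_encode f s y G).1 hy)
    · intro hy
      obtain ⟨x, rfl⟩ := Quotient.exists_rep y
      obtain ⟨G, hG1, hG2⟩ := mem_W_of_mem_Ps hf hopen hW hy
      exact ⟨G, hG2, (gmap_encode f s _ G).2 hG1⟩

/-- index type for the countable family of conditions cutting out the range of `gmap` -/
abbrev CIdx : Type := ℕ ⊕ (Unit ⊕ ((Finset ℕ × ℕ) ⊕ ((Finset ℕ × ℕ) ⊕ (Finset ℕ × ℕ))))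

/-- `U`-sides of the conditions -/
def condU (f : X → ℕ → Prop) (s : Setoid X) (U : ℕ → Set (ℕ → Prop)) : CIdx → Set (ℕ → Prop) :=
  fun i => match i with
  | Sum.inl n =>
      match (Encodable.decode n : Option (Finset ℕ)) with
      | none => Sb n
      | some _ => ∅
  | Sum.inr (Sum.inl _) => univ
  | Sum.inr (Sum.inr (Sum.inl (G, n))) => {β | cyl G ⊆ U n ∧ β (Encodable.encode G)}
  | Sum.inr (Sum.inr (Sum.inr (Sum.inl (G, k)))) => Sb k ∩ Sb (Encodable.encode G)
  | Sum.inr (Sum.inr (Sum.inr (Sum.inr (G, k)))) =>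
      {β | (∃ K : Finset ℕ, (Encodable.decode k : Option (Finset ℕ)) = some K ∧
        Bs f G ⊆ Quotient.mk s ⁻¹' Ps f s K) ∧ β (Encodable.encode G)}

/-- `V`-sides of the conditions -/
def condV (f : X → ℕ → Prop) (s : Setoid X) (V : ℕ → Set (ℕ → Prop)) : CIdx → Set (ℕ → Prop) :=
  fun i => match i with
  | Sum.inl _ => ∅
  | Sum.inr (Sum.inl _) => Sb (Encodable.encode (∅ : Finset ℕ))
  | Sum.inr (Sum.inr (Sum.inl (G, n))) =>
      ⋃ G' ∈ {G' : Finset ℕ | G ⊆ G' ∧ cyl G' ⊆ V n}, Sb (Encodable.encode G')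
  | Sum.inr (Sum.inr (Sum.inr (Sum.inl (G, k)))) =>
      match (Encodable.decode k : Option (Finset ℕ)) with
      | none => ∅
      | some K => ⋃ G' ∈ {G' : Finset ℕ | G ⊆ G' ∧
          Bs f G' ⊆ Quotient.mk s ⁻¹' Ps f s K}, Sb (Encodable.encode G')
  | Sum.inr (Sum.inr (Sum.inr (Sum.inr (G, k)))) => Sb k

lemma isOpen_condU (f : X → ℕ → Prop) (s : Setoid X) (U : ℕ → Set (ℕ → Prop)) (i : CIdx) :
    IsOpen (condU f s U i) := by
  classical
  rcases i with n | (u | (⟨G, n⟩ | (⟨G, k⟩ | ⟨G, k⟩)))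
  · show IsOpen (match (Encodable.decode n : Option (Finset ℕ)) with
      | none => Sb n | some _ => ∅)
    rcases (Encodable.decode n : Option (Finset ℕ)) with _ | K
    · exact isOpen_Sb n
    · exact isOpen_empty
  · exact isOpen_univ
  · show IsOpen {β : ℕ → Prop | cyl G ⊆ U n ∧ β (Encodable.encode G)}
    by_cases hc : cyl G ⊆ U n
    · have : {β : ℕ → Prop | cyl G ⊆ U n ∧ β (Encodable.encode G)} = Sb (Encodable.encode G) := by
        ext β; simp [Sb, hc]
      rw [this]; exact isOpen_Sb _
    · have : {β : ℕ → Prop | cyl G ⊆ U n ∧ β (Encodable.encode G)} = ∅ := by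
        ext β; simp [hc]
      rw [this]; exact isOpen_empty
  · exact (isOpen_Sb k).inter (isOpen_Sb _)
  · show IsOpen {β : ℕ → Prop | (∃ K : Finset ℕ,
      (Encodable.decode k : Option (Finset ℕ)) = some K ∧
      Bs f G ⊆ Quotient.mk s ⁻¹' Ps f s K) ∧ β (Encodable.encode G)}
    by_cases hc : ∃ K : Finset ℕ, (Encodable.decode k : Option (Finset ℕ)) = some K ∧
        Bs f G ⊆ Quotient.mk s ⁻¹' Ps f s K
    · have : {β : ℕ → Prop | (∃ K : Finset ℕ,
          (Encodable.decode k : Option (Finset ℕ)) = some K ∧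
          Bs f G ⊆ Quotient.mk s ⁻¹' Ps f s K) ∧ β (Encodable.encode G)} =
          Sb (Encodable.encode G) := by
        ext β; simp only [mem_setOf_eq, Sb]; exact ⟨fun h => h.2, fun h => ⟨hc, h⟩⟩
      rw [this]; exact isOpen_Sb _
    · have : {β : ℕ → Prop | (∃ K : Finset ℕ,
          (Encodable.decode k : Option (Finset ℕ)) = some K ∧
          Bs f G ⊆ Quotient.mk s ⁻¹' Ps f s K) ∧ β (Encodable.encode G)} = ∅ := by
        ext β; simp only [mem_setOf_eq, mem_empty_iff_false, iff_false]
        exact fun h => hc h.1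
      rw [this]; exact isOpen_empty

lemma isOpen_condV (f : X → ℕ → Prop) (s : Setoid X) (V : ℕ → Set (ℕ → Prop)) (i : CIdx) :
    IsOpen (condV f s V i) := by
  rcases i with n | (u | (⟨G, n⟩ | (⟨G, k⟩ | ⟨G, k⟩)))
  · exact isOpen_empty
  · exact isOpen_Sb _
  · exact isOpen_biUnion fun G' _ => isOpen_Sb _
  · show IsOpen (match (Encodable.decode k : Option (Finset ℕ)) with
      | none => ∅
      | some K => ⋃ G' ∈ {G' : Finset ℕ | G ⊆ G' ∧
          Bs f G' ⊆ Quotient.mk s ⁻¹' Ps f s K}, Sb (Encodable.encode G'))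
    rcases (Encodable.decode k : Option (Finset ℕ)) with _ | K
    · exact isOpen_empty
    · exact isOpen_biUnion fun G' _ => isOpen_Sb _
  · exact isOpen_Sb k

lemma Bs_union (f : X → ℕ → Prop) (G F : Finset ℕ) :
    Bs f (G ∪ F) = Bs f G ∩ Bs f F := by
  show f ⁻¹' cyl (G ∪ F) = _
  rw [cyl_union, preimage_inter]; rfl

lemma gmap_range_subset {U V : ℕ → Set (ℕ → Prop)}
    (hf : IsEmbedding f) (hopen : IsOpenMap (Quotient.mk s))
    (hV : ∀ n, IsOpen (V n))
    (hrange : Set.range f = ⋂ n, (U n)ᶜ ∪ V n) :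
    Set.range (gmap f s) ⊆ ⋂ i, (condU f s U i)ᶜ ∪ condV f s V i := by
  rintro - ⟨y, rfl⟩
  obtain ⟨x, rfl⟩ := Quotient.exists_rep y
  rw [mem_iInter]
  rintro (n | (u | (⟨G, n⟩ | (⟨G, k⟩ | ⟨G, k⟩))))
  -- K0
  · simp only [condU, condV]
    rcases hd : (Encodable.decode n : Option (Finset ℕ)) with _ | K
    · left
      rintro ⟨G, hG, -⟩
      rw [hd] at hG
      exact nomatch hG
    · left
      exact notMem_empty _
  -- K1
  · simp only [condU, condV]
    right
    show gmap f s _ (Encodable.encode (∅ : Finset ℕ))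
    exact (gmap_encode f s _ ∅).2 (mem_image_of_mem _ (mem_cyl_empty _))
  -- K2
  · simp only [condU, condV]
    by_cases h1 : cyl G ⊆ U n ∧ gmap f s (Quotient.mk s x) (Encodable.encode G)
    · right
      obtain ⟨hc, hm⟩ := h1
      obtain ⟨x', hx'B, hx'q⟩ := (gmap_encode f s _ G).1 hm
      have hfx' : f x' ∈ V n := by
        have h2 : f x' ∈ Set.range f := mem_range_self x'
        rw [hrange, mem_iInter] at h2
        rcases h2 n with h | h
        · exact absurd (hc hx'B) h
        · exact h
      obtain ⟨F, hF1, hF2⟩ := exists_cyl (hV n) hfx'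
      rw [mem_iUnion₂]
      refine ⟨G ∪ F, ⟨Finset.subset_union_left, ?_⟩, ?_⟩
      · rw [cyl_union]; exact inter_subset_right.trans hF2
      · show gmap f s _ (Encodable.encode (G ∪ F))
        refine (gmap_encode f s _ _).2 ⟨x', ?_, hx'q⟩
        rw [Bs_union]
        exact ⟨hx'B, hF1⟩
    · left
      exact h1
  -- K3
  · simp only [condU, condV]
    by_cases h1 : gmap f s (Quotient.mk s x) k ∧ gmap f s (Quotient.mk s x) (Encodable.encode G)
    · right
      obtain ⟨⟨K, hdK, hyPK⟩, hm⟩ := h1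
      rw [hdK]
      obtain ⟨x', hx'B, hx'q⟩ := (gmap_encode f s _ G).1 hm
      have hAopen : IsOpen (Quotient.mk s ⁻¹' Ps f s K) :=
        (isOpen_Ps hf hopen K).preimage continuous_quotient_mk'
      have hx'A : x' ∈ Quotient.mk s ⁻¹' Ps f s K := by
        show Quotient.mk s x' ∈ Ps f s K
        rw [hx'q]; exact hyPK
      obtain ⟨G₁, hxG₁, hsub⟩ := basic_nbhd hf (hAopen.inter (isOpen_Bs hf G))
        (mem_inter hx'A hx'B)
      rw [mem_iUnion₂]
      refine ⟨G ∪ G₁, ⟨Finset.subset_union_left, ?_⟩, ?_⟩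
      · rw [Bs_union]
        exact inter_subset_right.trans (hsub.trans inter_subset_left)
      · show gmap f s _ (Encodable.encode (G ∪ G₁))
        refine (gmap_encode f s _ _).2 ⟨x', ?_, hx'q⟩
        rw [Bs_union]
        exact ⟨hx'B, hxG₁⟩
    · left
      intro hc
      exact h1 ⟨hc.1, hc.2⟩
  -- K4
  · simp only [condU, condV]
    by_cases h1 : (∃ K : Finset ℕ, (Encodable.decode k : Option (Finset ℕ)) = some K ∧
        Bs f G ⊆ Quotient.mk s ⁻¹' Ps f s K) ∧
        gmap f s (Quotient.mk s x) (Encodable.encode G)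
    · right
      obtain ⟨⟨K, hdK, hsub⟩, hm⟩ := h1
      obtain ⟨x', hx'B, hx'q⟩ := (gmap_encode f s _ G).1 hm
      show gmap f s _ k
      rw [gmap_decode hdK]
      rw [← hx'q]
      exact hsub hx'B
    · left
      exact h1

lemma gmap_subset_range {U V : ℕ → Set (ℕ → Prop)}
    (hf : IsEmbedding f) (hopen : IsOpenMap (Quotient.mk s))
    (hU : ∀ n, IsOpen (U n))
    (hrange : Set.range f = ⋂ n, (U n)ᶜ ∪ V n) :
    ⋂ i, (condU f s U i)ᶜ ∪ condV f s V i ⊆ Set.range (gmap f s) := by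
  intro β hβ
  rw [mem_iInter] at hβ
  -- the five groups of conditions, specialized
  have hK0 : ∀ n : ℕ, (Encodable.decode n : Option (Finset ℕ)) = none → ¬ β n := by
    intro n hd hn
    have := hβ (Sum.inl n)
    simp only [condU, condV] at this
    rw [hd] at this
    rcases this with h | h
    · exact h hn
    · exact notMem_empty _ h
  have hK1 : β (Encodable.encode (∅ : Finset ℕ)) := by
    have := hβ (Sum.inr (Sum.inl ()))
    simp only [condU, condV] at this
    rcases this with h | h
    · exact absurd (mem_univ β) h
    · exact h
  have hK2 : ∀ (G : Finset ℕ) (n : ℕ), cyl G ⊆ U n → β (Encodable.encode G) →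
      ∃ G', G ⊆ G' ∧ cyl G' ⊆ V n ∧ β (Encodable.encode G') := by
    intro G n hc hm
    have := hβ (Sum.inr (Sum.inr (Sum.inl (G, n))))
    simp only [condU, condV] at this
    rcases this with h | h
    · exact absurd ⟨hc, hm⟩ h
    · rw [mem_iUnion₂] at h
      obtain ⟨G', ⟨h1, h2⟩, h3⟩ := h
      exact ⟨G', h1, h2, h3⟩
  have hK3 : ∀ (G K : Finset ℕ) (k : ℕ), (Encodable.decode k : Option (Finset ℕ)) = some K →
      β k → β (Encodable.encode G) →
      ∃ G', G ⊆ G' ∧ Bs f G' ⊆ Quotient.mk s ⁻¹' Ps f s K ∧ β (Encodable.encode G') := by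
    intro G K k hd hk hm
    have := hβ (Sum.inr (Sum.inr (Sum.inr (Sum.inl (G, k)))))
    simp only [condU, condV] at this
    rw [hd] at this
    rcases this with h | h
    · exact absurd ⟨hk, hm⟩ h
    · rw [mem_iUnion₂] at h
      obtain ⟨G', ⟨h1, h2⟩, h3⟩ := h
      exact ⟨G', h1, h2, h3⟩
  have hK4 : ∀ (G K : Finset ℕ) (k : ℕ), (Encodable.decode k : Option (Finset ℕ)) = some K →
      Bs f G ⊆ Quotient.mk s ⁻¹' Ps f s K → β (Encodable.encode G) → β k := by
    intro G K k hd hsub hm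
    have := hβ (Sum.inr (Sum.inr (Sum.inr (Sum.inr (G, k)))))
    simp only [condU, condV] at this
    rcases this with h | h
    · exact absurd ⟨⟨K, hd, hsub⟩, hm⟩ h
    · exact h
  -- run the construction
  obtain ⟨Gs, hmono, hinv, hach⟩ := scheme (τ := ℕ ⊕ ℕ)
    (fun G => β (Encodable.encode G))
    (fun t G => Sum.elim (fun n => cyl G ⊆ U n) (fun k => β k) t)
    (fun t G => Sum.elim (fun n => cyl G ⊆ V n)
      (fun k => ∃ K : Finset ℕ, (Encodable.decode k : Option (Finset ℕ)) = some K ∧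
        Bs f G ⊆ Quotient.mk s ⁻¹' Ps f s K) t)
    hK1
    (by rintro (n | k) G G' hGG' h
        · exact (cyl_mono hGG').trans h
        · exact h)
    (by rintro (n | k) G hInvG hTrigG
        · obtain ⟨G', h1, h2, h3⟩ := hK2 G n hTrigG hInvG
          exact ⟨G', h1, h3, h2⟩
        · rcases hd : (Encodable.decode k : Option (Finset ℕ)) with _ | K
          · exact absurd hTrigG (hK0 k hd)
          · obtain ⟨G', h1, h2, h3⟩ := hK3 G K k hd hTrigG hInvG
            exact ⟨G', h1, h3, K, hd, h2⟩)
  -- the limit point lies in the range of f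
  have hlim : limpt Gs ∈ Set.range f := by
    rw [hrange, mem_iInter]
    intro n
    by_cases h : limpt Gs ∈ U n
    · obtain ⟨i, hi⟩ := (limpt_mem_open_iff hmono (hU n)).1 h
      obtain ⟨j, hj⟩ := hach (Sum.inl n) i hi
      exact Or.inr (hj (limpt_mem_cyl j))
    · exact Or.inl h
  obtain ⟨x, hx⟩ := hlim
  refine ⟨Quotient.mk s x, ?_⟩
  funext n
  apply propext
  rcases hd : (Encodable.decode n : Option (Finset ℕ)) with _ | K
  · constructor
    · rintro ⟨G, hG, -⟩
      rw [hd] at hG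
      exact nomatch hG
    · intro h
      exact absurd h (hK0 n hd)
  · rw [gmap_decode hd]
    constructor
    · -- q x ∈ Ps K → β n
      intro hyP
      have hxA : x ∈ Quotient.mk s ⁻¹' Ps f s K := hyP
      have hAopen : IsOpen (Quotient.mk s ⁻¹' Ps f s K) :=
        (isOpen_Ps hf hopen K).preimage continuous_quotient_mk'
      obtain ⟨G₁, hxG₁, hsub⟩ := basic_nbhd hf hAopen hxA
      have hG₁α : ∀ m ∈ G₁, ∃ i, m ∈ Gs i := by
        intro m hm
        have : f x ∈ cyl G₁ := hxG₁
        rw [hx] at this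
        exact this m hm
      obtain ⟨i, hi⟩ := finset_subset_stage hmono G₁ hG₁α
      have hBsub : Bs f (Gs i) ⊆ Quotient.mk s ⁻¹' Ps f s K := by
        intro z hz
        apply hsub
        exact fun m hm => hz m (hi hm)
      exact hK4 (Gs i) K n hd hBsub (hinv i)
    · -- β n → q x ∈ Ps K
      intro hn
      obtain ⟨j, hj⟩ := hach (Sum.inr n) 0 hn
      obtain ⟨K', hd', hsub⟩ := hj
      rw [hd] at hd'
      obtain rfl : K = K' := by injection hd'
      apply hsub
      show f x ∈ cyl (Gs j)
      rw [hx]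
      exact limpt_mem_cyl j

lemma imp21 (hf : IsEmbedding f) (hr : IsPi02 (Set.range f))
    (hopen : IsOpenMap (Quotient.mk s)) (hT0 : T0Space (Quotient s)) :
    QuasiPolish (Quotient s) := by
  obtain ⟨U, V, hU, hV, hrange⟩ := hr
  refine ⟨gmap f s, ⟨gmap_inducing hf hopen, gmap_injective hf hopen hT0⟩, ?_⟩
  exact isPi02_of_encodable (ι := CIdx) (condU f s U) (condV f s V)
    (isOpen_condU f s U) (isOpen_condV f s V)
    (subset_antisymm (gmap_range_subset hf hopen hV hrange)
      (gmap_subset_range hf hopen hU hrange))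

end Quot


/-- quasi-Polish Sierpiński theorem. For a quasi-Polish space
`X` and an equivalence relation `E` (a setoid `s`) on `X` whose quotient map is
open, the following are equivalent: `X/E` is quasi-Polish; `X/E` is `T₀`;
`E ⊆ X²` is `Π⁰₂`; every `E`-class is `Π⁰₂`. -/
theorem stmt_12 {X : Type*} [TopologicalSpace X] (hX : QuasiPolish X)
    (s : Setoid X) (hopen : IsOpenMap (Quotient.mk s)) :
    List.TFAE [QuasiPolish (Quotient s),
      T0Space (Quotient s),
      IsPi02 {p : X × X | s.r p.1 p.2},
      ∀ x : X, IsPi02 {y : X | s.r x y}] := by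
  obtain ⟨f, hf, hr⟩ := hX
  tfae_have 1 → 2 := imp12
  tfae_have 2 → 3 := fun h => imp23 hf hopen h
  tfae_have 3 → 4 := fun h x => imp34 h x
  tfae_have 4 → 2 := fun h => imp42 hf hr hopen h
  tfae_have 2 → 1 := fun h => imp21 hf hr hopen h
  tfae_finish
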